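/- Let U be a unitary operator on a complex Hilbert space H. Via the Cayley graph map 𝒞, the reflections in the lagrangians 𝒞(U) and in the vertical space H⁻ = 0 ⊕ H satisfy: R_{𝒞(U)} + R_{H⁻} is conjugate (by a fixed unitary Φ depending only on H⁺) to the block operator [[0, (1−U)*],[1−U, 0]]. Consequently R_{𝒞(U)} + R_{H⁻} lies in a two-sided ideal 𝓘 (in the sense that all its blocks do) if and only if 1 − U ∈ 𝓘. -/

import Mathlib

noncomputable section

variable (H : Type) [NormedAddCommGroup H] [InnerProductSpace ℂ H] [CompleteSpace H]

/-- `Ĥ = H ⊕ H` with the Hilbert (l²) structure. -/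
abbrev Hh := WithLp 2 (H × H)

/-- The identification `Ĥ ≃ H × H`. -/
def prodEq : Hh H ≃L[ℂ] H × H := WithLp.prodContinuousLinearEquiv 2 ℂ H H

/-- The Cayley graph map: `𝒞(U) = Ran {v ↦ ((1+U)v, -i(1-U)v)} ⊆ H ⊕ H`. -/
def cayleyGraph (U : H →L[ℂ] H) : Submodule ℂ (Hh H) :=
  LinearMap.range
    (((prodEq H).symm.toContinuousLinearMap ∘L
      ((1 + U).prod ((-Complex.I) • (1 - U)))) : H →L[ℂ] Hh H).toLinearMap

/-- The vertical space `H⁻ = 0 ⊕ H` inside `Ĥ`. -/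
def vertical : Submodule ℂ (Hh H) :=
  LinearMap.range
    (((prodEq H).symm.toContinuousLinearMap ∘L
      (ContinuousLinearMap.inr ℂ H H)) : H →L[ℂ] Hh H).toLinearMap

/-- The orthogonal reflection `R_L = 2 P_L - 1` in the closed subspace `L`. -/
def reflIn (L : Submodule ℂ (Hh H)) [L.HasOrthogonalProjection] : Hh H →L[ℂ] Hh H :=
  (2 : ℂ) • (L.subtypeL ∘L L.orthogonalProjectionOnto) - 1

/-- The change-of-basis unitary `Φ = Φ_{H⁺}`, which as a map `H × H → H × H` is
`(x, y) ↦ ((x - y)/√2, (-i x - i y)/√2)` (here `J⁻¹` on `H⁻` and `J` on `H⁺` act as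
`∓1` under the canonical identifications). -/
def PhiH : Hh H →L[ℂ] Hh H :=
  (prodEq H).symm.toContinuousLinearMap ∘L
    ((((Real.sqrt 2 : ℝ) : ℂ)⁻¹ •
        (ContinuousLinearMap.fst ℂ H H - ContinuousLinearMap.snd ℂ H H)).prod
      (((Real.sqrt 2 : ℝ) : ℂ)⁻¹ •
        ((-Complex.I) • (ContinuousLinearMap.fst ℂ H H + ContinuousLinearMap.snd ℂ H H)))) ∘L
    (prodEq H).toContinuousLinearMap

/-- The block operator `[[0, (1-U)*], [1-U, 0]]` on `Ĥ`. -/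
def blockB (U : H →L[ℂ] H) : Hh H →L[ℂ] Hh H :=
  (prodEq H).symm.toContinuousLinearMap ∘L
    (((ContinuousLinearMap.adjoint (1 - U)) ∘L ContinuousLinearMap.snd ℂ H H).prod
      ((1 - U) ∘L ContinuousLinearMap.fst ℂ H H)) ∘L
    (prodEq H).toContinuousLinearMap

/-- The four blocks of an operator on `Ĥ = H⁺ ⊕ H⁻`, as operators on `H`. -/
def block (A : Hh H →L[ℂ] Hh H) (i j : Bool) : H →L[ℂ] H :=
  (if i then ContinuousLinearMap.snd ℂ H H else ContinuousLinearMap.fst ℂ H H) ∘L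
    ((prodEq H).toContinuousLinearMap ∘L A ∘L (prodEq H).symm.toContinuousLinearMap) ∘L
    (if j then ContinuousLinearMap.inr ℂ H H else ContinuousLinearMap.inl ℂ H H)

set_option maxHeartbeats 1000000 in
open ContinuousLinearMap in
lemma proj_range_eq {E : Type} [NormedAddCommGroup E] [InnerProductSpace ℂ E] [CompleteSpace E]
    {G : Type} [NormedAddCommGroup G] [InnerProductSpace ℂ G] [CompleteSpace G]
    (T : G →L[ℂ] E) (c : ℝ) (hc : (c:ℂ) ≠ 0) (hT : ∀ v, adjoint T (T v) = (c:ℂ) • v)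
    (L : Submodule ℂ E) (hL : L = LinearMap.range T.toLinearMap)
    [Submodule.HasOrthogonalProjection L] (z : E) :
    (Submodule.orthogonalProjectionOnto L z : E) = (c:ℂ)⁻¹ • T (adjoint T z) := by
  rw [← Submodule.starProjection_apply]
  apply Submodule.eq_starProjection_of_mem_of_inner_eq_zero
  · rw [hL]
    exact ⟨(c:ℂ)⁻¹ • adjoint T z, by simp [map_smul]⟩
  · rintro w hw
    rw [hL] at hw
    obtain ⟨v, rfl⟩ := hw
    simp only [inner_sub_left, ContinuousLinearMap.coe_coe, inner_smul_left]
    rw [← ContinuousLinearMap.adjoint_inner_left T, ← ContinuousLinearMap.adjoint_inner_left T,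
      hT]
    rw [inner_smul_left]
    simp only [Complex.conj_ofReal]
    field_simp
    simp [map_div₀, Complex.conj_ofReal, hc]

def Tv : H →L[ℂ] Hh H :=
  (prodEq H).symm.toContinuousLinearMap ∘L (ContinuousLinearMap.inr ℂ H H)

open ContinuousLinearMap in
lemma Tv_adj : adjoint (Tv H) =
    ContinuousLinearMap.snd ℂ H H ∘L (prodEq H).toContinuousLinearMap := by
  symm
  rw [ContinuousLinearMap.eq_adjoint_iff]
  intro x y
  simp [Tv, prodEq, WithLp.prod_inner_apply]

def Tc (U : H →L[ℂ] H) : H →L[ℂ] Hh H :=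
  (prodEq H).symm.toContinuousLinearMap ∘L ((1 + U).prod ((-Complex.I) • (1 - U)))

open ContinuousLinearMap in
lemma Tc_adj (U : H →L[ℂ] H) : adjoint (Tc H U) =
    ((1 + adjoint U) ∘L fst ℂ H H + (Complex.I • (1 - adjoint U)) ∘L snd ℂ H H) ∘L
      (prodEq H).toContinuousLinearMap := by
  symm
  rw [ContinuousLinearMap.eq_adjoint_iff]
  intro x y
  simp [Tc, prodEq, WithLp.prod_inner_apply, inner_add_left, inner_add_right,
    inner_sub_left, inner_sub_right, inner_smul_left, inner_smul_right,
    ContinuousLinearMap.adjoint_inner_left]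
  try ring

section
variable {H} (U : H →L[ℂ] H)
open ContinuousLinearMap

lemma unit1 (hU : U ∈ unitary (H →L[ℂ] H)) : ∀ x, adjoint U (U x) = x := by
  intro x
  have h1 : (adjoint U) ∘L U = 1 := by
    rw [← ContinuousLinearMap.star_eq_adjoint]; exact hU.1
  have := ContinuousLinearMap.ext_iff.mp h1 x
  simpa using this

lemma unit2 (hU : U ∈ unitary (H →L[ℂ] H)) : ∀ x, U (adjoint U x) = x := by
  intro x
  have h1 : U ∘L (adjoint U) = 1 := by
    rw [← ContinuousLinearMap.star_eq_adjoint]; exact hU.2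
  have := ContinuousLinearMap.ext_iff.mp h1 x
  simpa using this

lemma Tc_isom (hU : U ∈ unitary (H →L[ℂ] H)) :
    ∀ v, adjoint (Tc H U) (Tc H U v) = ((4:ℝ):ℂ) • v := by
  intro v
  rw [Tc_adj]
  simp [Tc, prodEq, unit1 U hU, smul_smul, smul_sub, smul_add, map_smul, map_sub, map_add,
    mul_neg, Complex.I_mul_I, neg_neg]
  module

lemma Tv_isom : ∀ v, adjoint (Tv H) (Tv H v) = ((1:ℝ):ℂ) • v := by
  intro v
  rw [Tv_adj]
  simp [Tv, prodEq]

lemma reflIn_apply (L : Submodule ℂ (Hh H)) [Submodule.HasOrthogonalProjection L] (z : Hh H) :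
    reflIn H L z = (2:ℂ) • (Submodule.orthogonalProjectionOnto L z : Hh H) - z := by
  simp [reflIn]

lemma refl_sum_apply (hU : U ∈ unitary (H →L[ℂ] H))
    [Submodule.HasOrthogonalProjection (cayleyGraph H U)] [Submodule.HasOrthogonalProjection (vertical H)]
    (z : Hh H) :
    prodEq H ((reflIn H (cayleyGraph H U) + reflIn H (vertical H)) z) =
      ((2:ℂ)⁻¹ • (U (prodEq H z).1 + adjoint U (prodEq H z).1) - (prodEq H z).1
         + ((2:ℂ)⁻¹ * Complex.I) • (U (prodEq H z).2 - adjoint U (prodEq H z).2),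
       ((2:ℂ)⁻¹ * Complex.I) • (U (prodEq H z).1 - adjoint U (prodEq H z).1) + (prodEq H z).2
         - (2:ℂ)⁻¹ • (U (prodEq H z).2 + adjoint U (prodEq H z).2)) := by
  have h1 : (Submodule.orthogonalProjectionOnto (cayleyGraph H U) z : Hh H)
      = ((4:ℝ):ℂ)⁻¹ • Tc H U (adjoint (Tc H U) z) :=
    proj_range_eq _ _ (by norm_num) (Tc_isom U hU) (cayleyGraph H U) rfl z
  have h2 : (Submodule.orthogonalProjectionOnto (vertical H) z : Hh H)
      = ((1:ℝ):ℂ)⁻¹ • Tv H (adjoint (Tv H) z) :=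
    proj_range_eq _ _ (by norm_num) (Tv_isom) (vertical H) rfl z
  rw [ContinuousLinearMap.add_apply, reflIn_apply, reflIn_apply, h1, h2, Tc_adj, Tv_adj]
  simp only [Tc, Tv, prodEq, map_add, map_sub, map_smul, ContinuousLinearMap.comp_apply,
    ContinuousLinearEquiv.coe_coe, ContinuousLinearEquiv.apply_symm_apply,
    ContinuousLinearMap.add_apply, ContinuousLinearMap.coe_fst', ContinuousLinearMap.coe_snd',
    ContinuousLinearMap.prod_apply, ContinuousLinearMap.one_apply,
    ContinuousLinearMap.smul_apply, ContinuousLinearMap.sub_apply,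
    unit1 U hU, unit2 U hU, ContinuousLinearMap.inr_apply, Prod.mk_add_mk, Prod.mk_sub_mk,
    Prod.smul_mk, Prod.ext_iff, Prod.fst_add, Prod.snd_add, Prod.fst_sub, Prod.snd_sub,
    Prod.smul_fst, Prod.smul_snd]
  constructor <;> [skip; skip] <;> match_scalars <;> (ring_nf; try simp [Complex.I_sq, Complex.I_mul_I]; try ring_nf)


lemma adj_one_sub (hU : U ∈ unitary (H →L[ℂ] H)) :
    ContinuousLinearMap.adjoint (1 - U) = 1 - ContinuousLinearMap.adjoint U := by
  rw [← ContinuousLinearMap.star_eq_adjoint, ← ContinuousLinearMap.star_eq_adjoint,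
    star_sub, star_one]

lemma conj_eq (hU : U ∈ unitary (H →L[ℂ] H))
    [Submodule.HasOrthogonalProjection (cayleyGraph H U)] [Submodule.HasOrthogonalProjection (vertical H)] :
    (reflIn H (cayleyGraph H U) + reflIn H (vertical H)) ∘L PhiH H = PhiH H ∘L blockB H U := by
  apply ContinuousLinearMap.ext; intro z
  apply (prodEq H).injective
  rw [ContinuousLinearMap.comp_apply, ContinuousLinearMap.comp_apply, refl_sum_apply U hU]
  simp only [PhiH, blockB, prodEq, map_add, map_sub, map_smul, ContinuousLinearMap.comp_apply,
    ContinuousLinearEquiv.coe_coe, ContinuousLinearEquiv.apply_symm_apply,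
    ContinuousLinearMap.add_apply, ContinuousLinearMap.coe_fst', ContinuousLinearMap.coe_snd',
    ContinuousLinearMap.prod_apply, ContinuousLinearMap.one_apply,
    ContinuousLinearMap.smul_apply, ContinuousLinearMap.sub_apply,
    unit1 U hU, unit2 U hU, adj_one_sub U hU, ContinuousLinearMap.inr_apply, Prod.mk_add_mk,
    Prod.mk_sub_mk, Prod.smul_mk, Prod.ext_iff, Prod.fst_add, Prod.snd_add, Prod.fst_sub,
    Prod.snd_sub, Prod.smul_fst, Prod.smul_snd, ContinuousLinearMap.neg_apply, smul_add,
    smul_sub, neg_smul, smul_neg, map_neg]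
  constructor <;> match_scalars <;> (ring_nf; try simp [Complex.I_sq, Complex.I_mul_I]; try ring_nf)


section
variable [Submodule.HasOrthogonalProjection (cayleyGraph H U)] [Submodule.HasOrthogonalProjection (vertical H)]
open ContinuousLinearMap

lemma block_ff_ff (hU : U ∈ unitary (H →L[ℂ] H)) : block H (reflIn H (cayleyGraph H U) + reflIn H (vertical H)) false false
    = (2:ℂ)⁻¹ • (U + adjoint U) - 1 := by
  ext w
  simp only [block, if_neg Bool.false_ne_true, ContinuousLinearMap.comp_apply,
    ContinuousLinearEquiv.coe_coe]
  rw [refl_sum_apply U hU]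
  simp [prodEq]

lemma block_ff_tt (hU : U ∈ unitary (H →L[ℂ] H)) : block H (reflIn H (cayleyGraph H U) + reflIn H (vertical H)) false true
    = ((2:ℂ)⁻¹ * Complex.I) • (U - adjoint U) := by
  ext w
  simp only [block, if_neg Bool.false_ne_true, if_pos rfl, ContinuousLinearMap.comp_apply,
    ContinuousLinearEquiv.coe_coe]
  rw [refl_sum_apply U hU]
  simp [prodEq]

lemma block_tt_ff (hU : U ∈ unitary (H →L[ℂ] H)) : block H (reflIn H (cayleyGraph H U) + reflIn H (vertical H)) true false
    = ((2:ℂ)⁻¹ * Complex.I) • (U - adjoint U) := by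
  ext w
  simp only [block, if_neg Bool.false_ne_true, if_pos rfl, ContinuousLinearMap.comp_apply,
    ContinuousLinearEquiv.coe_coe]
  rw [refl_sum_apply U hU]
  simp [prodEq]

lemma block_tt_tt (hU : U ∈ unitary (H →L[ℂ] H)) : block H (reflIn H (cayleyGraph H U) + reflIn H (vertical H)) true true
    = 1 - (2:ℂ)⁻¹ • (U + adjoint U) := by
  ext w
  simp only [block, if_pos rfl, ContinuousLinearMap.comp_apply,
    ContinuousLinearEquiv.coe_coe]
  rw [refl_sum_apply U hU]
  simp [prodEq]

end


lemma ideal_smul_mem (𝓘 : TwoSidedIdeal (H →L[ℂ] H)) (c : ℂ) {A : H →L[ℂ] H} (h : A ∈ 𝓘) :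
    c • A ∈ 𝓘 := by
  have := 𝓘.mul_mem_left (c • 1) A h
  rwa [smul_one_mul] at this

open ContinuousLinearMap in
theorem final (hU : U ∈ unitary (H →L[ℂ] H))
    [Submodule.HasOrthogonalProjection (cayleyGraph H U)] [Submodule.HasOrthogonalProjection (vertical H)]
    (𝓘 : TwoSidedIdeal (H →L[ℂ] H)) :
    ((∀ i j : Bool, block H (reflIn H (cayleyGraph H U) + reflIn H (vertical H)) i j ∈ 𝓘) ↔
      (1 - U) ∈ 𝓘) := by
  constructor
  · intro h
    have h11 := h true true
    have h01 := h false true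
    rw [block_tt_tt U hU] at h11
    rw [block_ff_tt U hU] at h01
    have key : (1 - U) = (1 - (2:ℂ)⁻¹ • (U + adjoint U))
        + Complex.I • (((2:ℂ)⁻¹ * Complex.I) • (U - adjoint U)) := by
      match_scalars <;> (ring_nf; try simp [Complex.I_sq, Complex.I_mul_I]; try ring_nf)
    rw [key]
    exact 𝓘.add_mem h11 (ideal_smul_mem 𝓘 _ h01)
  · intro h
    have h' : (1 - adjoint U) ∈ 𝓘 := by
      have h2 := 𝓘.mul_mem_left (adjoint U) _ h
      have hrw : adjoint U * (1 - U) = adjoint U - 1 := by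
        ext x
        simp [ContinuousLinearMap.mul_apply, map_sub, unit1 U hU]
      rw [hrw] at h2
      have h3 := 𝓘.neg_mem h2
      simpa using h3
    have hb00 : ((2:ℂ)⁻¹ • (U + adjoint U) - 1) ∈ 𝓘 := by
      have e1 : ((2:ℂ)⁻¹ • (U + adjoint U) - 1) = (-(2:ℂ)⁻¹) • ((1 - U) + (1 - adjoint U)) := by
        match_scalars <;> ring
      rw [e1]
      exact ideal_smul_mem 𝓘 _ (𝓘.add_mem h h')
    have hb01 : (((2:ℂ)⁻¹ * Complex.I) • (U - adjoint U)) ∈ 𝓘 := by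
      have e2 : (((2:ℂ)⁻¹ * Complex.I) • (U - adjoint U))
          = ((2:ℂ)⁻¹ * Complex.I) • ((1 - adjoint U) + (-1 : ℂ) • (1 - U)) := by
        match_scalars <;> ring
      rw [e2]
      exact ideal_smul_mem 𝓘 _ (𝓘.add_mem h' (ideal_smul_mem 𝓘 _ h))
    have hb11 : (1 - (2:ℂ)⁻¹ • (U + adjoint U)) ∈ 𝓘 := by
      have e3 : (1 - (2:ℂ)⁻¹ • (U + adjoint U)) = -((2:ℂ)⁻¹ • (U + adjoint U) - 1) := (neg_sub _ _).symm
      rw [e3]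
      exact 𝓘.neg_mem hb00
    intro i j
    cases i <;> cases j
    · rw [block_ff_ff U hU]; exact hb00
    · rw [block_ff_tt U hU]; exact hb01
    · rw [block_tt_ff U hU]; exact hb01
    · rw [block_tt_tt U hU]; exact hb11


/-- for a unitary `U`, the sum of the reflections in `𝒞(U)` and in the
vertical space `H⁻` is conjugate by `Φ` to the block operator `[[0, (1-U)*], [1-U, 0]]`;
consequently all blocks of `R_{𝒞(U)} + R_{H⁻}` lie in a two-sided ideal `𝓘` if and
only if `1 - U ∈ 𝓘`. -/
theorem reflection_sum_conjugate_and_ideal (U : H →L[ℂ] H) (hU : U ∈ unitary (H →L[ℂ] H))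
    [Submodule.HasOrthogonalProjection (cayleyGraph H U)] [Submodule.HasOrthogonalProjection (vertical H)]
    (𝓘 : TwoSidedIdeal (H →L[ℂ] H)) :
    ((reflIn H (cayleyGraph H U) + reflIn H (vertical H)) ∘L PhiH H = PhiH H ∘L blockB H U) ∧
    ((∀ i j : Bool, block H (reflIn H (cayleyGraph H U) + reflIn H (vertical H)) i j ∈ 𝓘) ↔
      (1 - U) ∈ 𝓘) := by
  exact ⟨conj_eq U hU, final U hU 𝓘⟩
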